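/- For all $(x,y,z)\in\mathbb{R}^3$ with $x^2\ge z^2$, the matrix identity holds: $\begin{pmatrix} x^2+2z^2 & -xy & -xz\\ -xy & y^2+2x^2 & -yz\\ -xz & -yz & z^2+2y^2\end{pmatrix} = v v^T + 2 w w^T + 2z^2 E_{11} + 2(x^2-z^2)E_{22}$, where $v=(-x,y,z)^T$, $w=(0,-z,y)^T$, and $E_{11},E_{22}$ are the diagonal matrix units; in particular, on the region $x^2\ge z^2$ the Choi matrix is a sum of positive semi-definite matrices and hence positive semi-definite there. -/

import Mathlib

open Matrix

theorem stmt_9 (x y z : ℝ) (h : x^2 ≥ z^2) :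
    (!![x^2 + 2*z^2, -(x*y), -(x*z);
        -(x*y), y^2 + 2*x^2, -(y*z);
        -(x*z), -(y*z), z^2 + 2*y^2] : Matrix (Fin 3) (Fin 3) ℝ)
      = vecMulVec ![-x, y, z] ![-x, y, z]
        + (2 : ℝ) • vecMulVec ![0, -z, y] ![0, -z, y]
        + (2*z^2) • single 0 0 1
        + (2*(x^2 - z^2)) • single 1 1 1 ∧
    (!![x^2 + 2*z^2, -(x*y), -(x*z);
        -(x*y), y^2 + 2*x^2, -(y*z);
        -(x*z), -(y*z), z^2 + 2*y^2] : Matrix (Fin 3) (Fin 3) ℝ).PosSemidef := by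
  constructor
  · ext i j
    fin_cases i <;> fin_cases j <;>
      simp [vecMulVec_apply, Matrix.single, Matrix.add_apply, Matrix.smul_apply] <;> ring
  · rw [Matrix.posSemidef_iff_dotProduct_mulVec]
    constructor
    · ext i j; fin_cases i <;> fin_cases j <;> simp [Matrix.conjTranspose_apply] <;> ring
    · intro v
      have hq : v ⬝ᵥ (!![x^2 + 2*z^2, -(x*y), -(x*z);
          -(x*y), y^2 + 2*x^2, -(y*z);
          -(x*z), -(y*z), z^2 + 2*y^2] : Matrix (Fin 3) (Fin 3) ℝ).mulVec v =
          (-x*v 0 + y*v 1 + z*v 2)^2 + 2*(-z*v 1 + y*v 2)^2 + 2*z^2*(v 0)^2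
            + 2*(x^2-z^2)*(v 1)^2 := by
        simp [dotProduct, mulVec, Fin.sum_univ_three]
        ring
      rw [show star v = v from rfl]
      rw [hq]
      nlinarith [sq_nonneg (v 0), sq_nonneg (v 1), sq_nonneg (-x*v 0 + y*v 1 + z*v 2),
        sq_nonneg (-z*v 1 + y*v 2)]
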